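/- Let α ∈ (π/2, π), let θ ∈ (0, π/2), let r > 0 and put z = r·(cos θ − i·sin θ) (so that arg z = 2π − θ and Im z < 0). Then |cos α − i·z·sin α| ≤ ((1 + sin θ)/cos θ)·|cos α + i·z·sin α|. -/

import Mathlib

open Complex Real

/-- The inequality used in the proof of Corollary 3.2 for `π/2 < α < π`:
with `z = r(cos θ − i sin θ)`, `0 < θ < π/2`,
`|cos α − iz sin α| ≤ ((1 + sin θ)/cos θ)·|cos α + iz sin α|`. -/
theorem stmt_9
    (α : ℝ) (hα1 : π / 2 < α) (hα2 : α < π)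
    (θ : ℝ) (hθ1 : 0 < θ) (hθ2 : θ < π / 2)
    (r : ℝ) (hr : 0 < r)
    (z : ℂ) (hz : z = (r : ℂ) * ((Real.cos θ : ℂ) - Complex.I * (Real.sin θ : ℂ))) :
    ‖(Real.cos α : ℂ) - Complex.I * z * (Real.sin α : ℂ)‖ ≤
      ((1 + Real.sin θ) / Real.cos θ) *
        ‖(Real.cos α : ℂ) + Complex.I * z * (Real.sin α : ℂ)‖ := by
  have hc : Real.cos α < 0 := Real.cos_neg_of_pi_div_two_lt_of_lt hα1 (by linarith [Real.pi_pos])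
  have hs : 0 < Real.sin α := Real.sin_pos_of_pos_of_lt_pi (by linarith [Real.pi_pos]) hα2
  have hct : 0 < Real.cos θ := Real.cos_pos_of_mem_Ioo ⟨by linarith, hθ2⟩
  have hst : 0 < Real.sin θ := Real.sin_pos_of_pos_of_lt_pi hθ1 (by linarith [Real.pi_pos])
  have hst1 : Real.sin θ < 1 := by
    nlinarith [Real.sin_sq_add_cos_sq θ]
  have hK : 0 ≤ (1 + Real.sin θ) / Real.cos θ := by positivity
  have h1 : ‖(Real.cos α : ℂ) - Complex.I * z * (Real.sin α : ℂ)‖ ^ 2 ≤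
      (((1 + Real.sin θ) / Real.cos θ) * ‖(Real.cos α : ℂ) + Complex.I * z * (Real.sin α : ℂ)‖) ^ 2 := by
    rw [mul_pow]
    have e1 : ‖(Real.cos α : ℂ) - Complex.I * z * (Real.sin α : ℂ)‖ ^ 2 =
        Complex.normSq ((Real.cos α : ℂ) - Complex.I * z * (Real.sin α : ℂ)) := by
      rw [← Complex.sq_norm]
    have e2 : ‖(Real.cos α : ℂ) + Complex.I * z * (Real.sin α : ℂ)‖ ^ 2 =
        Complex.normSq ((Real.cos α : ℂ) + Complex.I * z * (Real.sin α : ℂ)) := by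
      rw [← Complex.sq_norm]
    rw [e1, e2, hz]
    simp only [Complex.normSq_apply, Complex.sub_re, Complex.add_re, Complex.sub_im,
      Complex.add_im, Complex.mul_re, Complex.mul_im, Complex.I_re, Complex.I_im,
      Complex.ofReal_re, Complex.ofReal_im]
    rw [div_pow, div_mul_eq_mul_div, le_div_iff₀ (by positivity)]
    ring_nf
    have hpy : Real.cos θ ^ 2 = 1 - Real.sin θ ^ 2 := by
      nlinarith [Real.sin_sq_add_cos_sq θ]
    have hpy4 : Real.cos θ ^ 4 = (1 - Real.sin θ ^ 2) ^ 2 := by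
      rw [show (4:ℕ) = 2 * 2 from rfl, pow_mul, hpy]
    rw [hpy4, hpy]
    nlinarith [mul_nonneg (mul_nonneg (by positivity : (0:ℝ) ≤ 2 * (1 + Real.sin θ)) hst.le)
      (sq_nonneg (Real.cos α + r * Real.sin α))]
  exact (pow_le_pow_iff_left₀ (norm_nonneg _) (by positivity) two_ne_zero).mp h1
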